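/- Let Ω be a finite index set with subsets Ω_H and Ω_L, band energies E_H(û) = ∑_{ω ∈ Ω_H} ‖û(ω)‖² and E_L(û) = ∑_{ω ∈ Ω_L} ‖û(ω)‖², and, for a fixed ε > 0, high-to-low frequency energy ratio HL(û) = E_H(û) / (E_L(û) + ε). Suppose H_I : Ω → ℂ satisfies ‖H_I(ω)‖ ≤ α for ω ∈ Ω_H and ‖H_I(ω)‖ ≥ β for ω ∈ Ω_L with 0 < α < β ≤ 1, and set v̂(ω) = H_I(ω) · û(ω). If HL(û) > 0, then HL(v̂) < HL(û), i.e. the operator strictly decreases the high-to-low frequency energy ratio. -/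
import Mathlib


/-- If the band bounds satisfy `0 < α < β ≤ 1`, then a frequency-multiplicative
operator strictly decreases a positive high-to-low frequency energy ratio. -/
theorem interp_strictly_decreases_HL
    {Ω : Type*} [Fintype Ω] (ΩH ΩL : Finset Ω) (ε : ℝ) (hε : 0 < ε)
    (H_I : Ω → ℂ) (α β : ℝ) (hα : 0 < α) (hαβ : α < β) (hβ : β ≤ 1)
    (hHigh : ∀ ω ∈ ΩH, ‖H_I ω‖ ≤ α)
    (hLow : ∀ ω ∈ ΩL, β ≤ ‖H_I ω‖)
    (u : Ω → ℂ)
    (hpos : 0 < (∑ ω ∈ ΩH, ‖u ω‖ ^ 2) / ((∑ ω ∈ ΩL, ‖u ω‖ ^ 2) + ε)) :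
    (∑ ω ∈ ΩH, ‖H_I ω * u ω‖ ^ 2) / ((∑ ω ∈ ΩL, ‖H_I ω * u ω‖ ^ 2) + ε)
      < (∑ ω ∈ ΩH, ‖u ω‖ ^ 2) / ((∑ ω ∈ ΩL, ‖u ω‖ ^ 2) + ε) := by
  set EH := ∑ ω ∈ ΩH, ‖u ω‖ ^ 2 with hEHdef
  set EL := ∑ ω ∈ ΩL, ‖u ω‖ ^ 2 with hELdef
  have hELnn : 0 ≤ EL := Finset.sum_nonneg fun _ _ => sq_nonneg _
  have hden : 0 < EL + ε := by positivity
  have hEHpos : 0 < EH := by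
    have h := mul_pos hpos hden
    rwa [div_mul_cancel₀ _ hden.ne'] at h
  have h1 : (∑ ω ∈ ΩH, ‖H_I ω * u ω‖ ^ 2) ≤ α ^ 2 * EH := by
    rw [hEHdef, Finset.mul_sum]
    refine Finset.sum_le_sum fun ω hω => ?_
    rw [norm_mul, mul_pow]
    exact mul_le_mul_of_nonneg_right
      (pow_le_pow_left₀ (norm_nonneg _) (hHigh ω hω) 2) (sq_nonneg _)
  have h2 : β ^ 2 * EL ≤ ∑ ω ∈ ΩL, ‖H_I ω * u ω‖ ^ 2 := by
    rw [hELdef, Finset.mul_sum]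
    refine Finset.sum_le_sum fun ω hω => ?_
    rw [norm_mul, mul_pow]
    exact mul_le_mul_of_nonneg_right
      (pow_le_pow_left₀ (hα.trans hαβ).le (hLow ω hω) 2) (sq_nonneg _)
  have hnum' : 0 ≤ ∑ ω ∈ ΩH, ‖H_I ω * u ω‖ ^ 2 :=
    Finset.sum_nonneg fun _ _ => sq_nonneg _
  have hden' : 0 < (∑ ω ∈ ΩL, ‖H_I ω * u ω‖ ^ 2) + ε := by
    have : 0 ≤ ∑ ω ∈ ΩL, ‖H_I ω * u ω‖ ^ 2 :=
      Finset.sum_nonneg fun _ _ => sq_nonneg _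
    linarith
  rw [div_lt_div_iff₀ hden' hden]
  have hβpos : 0 < β := hα.trans hαβ
  have hα2β2 : α ^ 2 < β ^ 2 := by nlinarith
  have hα21 : α ^ 2 < 1 := by nlinarith
  have key : α ^ 2 * (EL + ε) < β ^ 2 * EL + ε := by nlinarith
  calc (∑ ω ∈ ΩH, ‖H_I ω * u ω‖ ^ 2) * (EL + ε)
      ≤ α ^ 2 * EH * (EL + ε) := mul_le_mul_of_nonneg_right h1 hden.le
    _ = EH * (α ^ 2 * (EL + ε)) := by ring
    _ < EH * (β ^ 2 * EL + ε) := mul_lt_mul_of_pos_left key hEHpos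
    _ ≤ EH * ((∑ ω ∈ ΩL, ‖H_I ω * u ω‖ ^ 2) + ε) := by
        apply mul_le_mul_of_nonneg_left _ hEHpos.le
        linarith
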